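/- Let g : ℝ^{n×p} → ℝ be a convex function that is Lipschitz continuous with constant L ≥ 0 (with respect to the Frobenius norm), and let σ > 0. Then the Moreau envelope env_{σ,g} is continuously (Fréchet) differentiable on ℝ^{n×p}, and its gradient is given by ∇env_{σ,g}(X) = (1/σ)·(X − prox_{σ,g}(X)) for every X ∈ ℝ^{n×p}. -/

import Mathlib

open Matrix

attribute [local instance]
  Matrix.frobeniusSeminormedAddCommGroup
  Matrix.frobeniusNormedAddCommGroup
  Matrix.frobeniusNormedSpace

section MipAux

variable {n p : ℕ}

def mip (A B : Matrix (Fin n) (Fin p) ℝ) : ℝ := ∑ i, ∑ j, A i j * B i j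

lemma mip_comm (A B : Matrix (Fin n) (Fin p) ℝ) : mip A B = mip B A := by
  simp [mip, mul_comm]

lemma mip_add_left (A B C : Matrix (Fin n) (Fin p) ℝ) :
    mip (A + B) C = mip A C + mip B C := by
  simp [mip, add_mul, Finset.sum_add_distrib]

lemma mip_add_right (A B C : Matrix (Fin n) (Fin p) ℝ) :
    mip A (B + C) = mip A B + mip A C := by
  simp [mip, mul_add, Finset.sum_add_distrib]

lemma mip_sub_left (A B C : Matrix (Fin n) (Fin p) ℝ) :
    mip (A - B) C = mip A C - mip B C := by
  simp [mip, sub_mul, Finset.sum_sub_distrib]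

lemma mip_sub_right (A B C : Matrix (Fin n) (Fin p) ℝ) :
    mip A (B - C) = mip A B - mip A C := by
  simp [mip, mul_sub, Finset.sum_sub_distrib]

lemma mip_smul_left (c : ℝ) (A B : Matrix (Fin n) (Fin p) ℝ) :
    mip (c • A) B = c * mip A B := by
  simp [mip, Finset.mul_sum, mul_assoc]

lemma mip_smul_right (c : ℝ) (A B : Matrix (Fin n) (Fin p) ℝ) :
    mip A (c • B) = c * mip A B := by
  simp only [mip, Matrix.smul_apply, smul_eq_mul, Finset.mul_sum]
  congr 1; ext i; congr 1; ext j; ring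

lemma norm_sq_eq_mip (A : Matrix (Fin n) (Fin p) ℝ) : ‖A‖ ^ 2 = mip A A := by
  rw [Matrix.frobenius_norm_def, ← Real.rpow_natCast _ 2, ← Real.rpow_mul (by positivity)]
  norm_num
  simp [mip, Real.rpow_two, sq, Real.norm_eq_abs, abs_mul_abs_self]

lemma mip_self_nonneg (A : Matrix (Fin n) (Fin p) ℝ) : 0 ≤ mip A A := by
  rw [← norm_sq_eq_mip]; positivity

lemma mip_repr (A B : Matrix (Fin n) (Fin p) ℝ) :
    mip A B = ∑ x : Fin n × Fin p, A x.1 x.2 * B x.1 x.2 :=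
  (Fintype.sum_prod_type (fun x : Fin n × Fin p => A x.1 x.2 * B x.1 x.2)).symm

lemma mip_le_norm (A B : Matrix (Fin n) (Fin p) ℝ) : mip A B ≤ ‖A‖ * ‖B‖ := by
  have h2 : (mip A B) ^ 2 ≤ mip A A * mip B B := by
    simpa [mip_repr, sq] using
      Finset.sum_mul_sq_le_sq_mul_sq Finset.univ (fun x : Fin n × Fin p => A x.1 x.2)
        (fun x => B x.1 x.2)
  rcases le_or_gt (mip A B) 0 with h | h
  · exact h.trans (by positivity)
  · refine le_of_pow_le_pow_left₀ two_ne_zero (by positivity) ?_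
    rw [mul_pow, norm_sq_eq_mip, norm_sq_eq_mip]; exact h2

lemma norm_add_sq_mip (A B : Matrix (Fin n) (Fin p) ℝ) :
    ‖A + B‖ ^ 2 = ‖A‖ ^ 2 + 2 * mip A B + ‖B‖ ^ 2 := by
  simp only [norm_sq_eq_mip, mip_add_left, mip_add_right, mip_comm B A]; ring

lemma norm_sub_sq_mip (A B : Matrix (Fin n) (Fin p) ℝ) :
    ‖A - B‖ ^ 2 = ‖A‖ ^ 2 - 2 * mip A B + ‖B‖ ^ 2 := by
  simp only [norm_sq_eq_mip, mip_sub_left, mip_sub_right, mip_comm B A]; ring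

lemma traceForm_eq_mip (G H : Matrix (Fin n) (Fin p) ℝ) :
    (Gᵀ * H).trace = mip G H := by
  simp only [Matrix.trace, Matrix.diag, Matrix.mul_apply, Matrix.transpose_apply, mip]
  rw [Finset.sum_comm]

end MipAux

/-- The Moreau envelope of `g` with smoothing parameter `σ`. -/
noncomputable def moreauEnv {n p : ℕ} (g : Matrix (Fin n) (Fin p) ℝ → ℝ) (σ : ℝ)
    (X : Matrix (Fin n) (Fin p) ℝ) : ℝ :=
  ⨅ Y : Matrix (Fin n) (Fin p) ℝ, (g Y + 1 / (2 * σ) * ‖Y - X‖ ^ 2)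

/-- The linear functional `H ↦ tr(Gᵀ H) = ⟨G, H⟩` (Frobenius inner product with `G`). -/
noncomputable def traceForm {n p : ℕ} (G : Matrix (Fin n) (Fin p) ℝ) :
    Matrix (Fin n) (Fin p) ℝ →ₗ[ℝ] ℝ where
  toFun H := (Gᵀ * H).trace
  map_add' Y Z := by simp [Matrix.mul_add]
  map_smul' c Y := by simp [Matrix.mul_smul]

set_option maxHeartbeats 2000000 in
/-- If `g` is convex and `L`-Lipschitz and `σ > 0`, then the Moreau envelope
`env_{σ,g}` is continuously (Fréchet) differentiable, with gradient (w.r.t. the Frobenius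
inner product) `∇env_{σ,g}(X) = (1/σ)·(X − prox_{σ,g}(X))`, where `prox` is the proximal
operator, i.e. the global minimizer of `Y ↦ g(Y) + (1/(2σ))‖Y − X‖_F²`. -/
theorem moreau_envelope_differentiable {n p : ℕ} (g : Matrix (Fin n) (Fin p) ℝ → ℝ) (L : ℝ)
    (hL : 0 ≤ L) (hconv : ConvexOn ℝ Set.univ g)
    (hlip : ∀ X Y : Matrix (Fin n) (Fin p) ℝ, |g X - g Y| ≤ L * ‖X - Y‖)
    (σ : ℝ) (hσ : 0 < σ)
    (prox : Matrix (Fin n) (Fin p) ℝ → Matrix (Fin n) (Fin p) ℝ)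
    (hprox : ∀ X Z : Matrix (Fin n) (Fin p) ℝ,
      g (prox X) + 1 / (2 * σ) * ‖prox X - X‖ ^ 2 ≤ g Z + 1 / (2 * σ) * ‖Z - X‖ ^ 2) :
    ContDiff ℝ 1 (moreauEnv g σ) ∧
    ∀ X : Matrix (Fin n) (Fin p) ℝ,
      HasFDerivAt (moreauEnv g σ)
        (LinearMap.toContinuousLinearMap (traceForm (σ⁻¹ • (X - prox X)))) X := by
  have hc : (0:ℝ) < 1 / (2 * σ) := by positivity
  set c : ℝ := 1 / (2 * σ) with hcdef
  -- the envelope equals the value at prox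
  have envEq : ∀ X, moreauEnv g σ X = g (prox X) + c * ‖prox X - X‖ ^ 2 := by
    intro X
    refine le_antisymm ?_ (le_ciInf (hprox X))
    exact ciInf_le ⟨g (prox X) + c * ‖prox X - X‖ ^ 2, by
      rintro r ⟨Y, rfl⟩; exact hprox X Y⟩ (prox X)
  -- application of the continuous linear map
  have appEq : ∀ G H : Matrix (Fin n) (Fin p) ℝ,
      (LinearMap.toContinuousLinearMap (traceForm G)) H = mip G H := by
    intro G H
    simp only [LinearMap.coe_toContinuousLinearMap']
    exact traceForm_eq_mip G H
  -- subgradient inequality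
  have subgrad : ∀ X v : Matrix (Fin n) (Fin p) ℝ,
      g (prox X) + σ⁻¹ * mip (X - prox X) (v - prox X) ≤ g v := by
    intro X v
    set u := prox X with hu
    set w := v - u with hw
    have key : ∀ t : ℝ, 0 < t → t ≤ 1 →
        g u + σ⁻¹ * mip (X - u) w ≤ g v + t * (c * ‖w‖ ^ 2) := by
      intro t ht0 ht1
      have hcv : g ((1 - t) • u + t • v) ≤ (1 - t) * g u + t * g v :=
        hconv.2 (Set.mem_univ u) (Set.mem_univ v) (by linarith) ht0.le (by ring)
      have hZ : (1 - t) • u + t • v - X = (u - X) + t • w := by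
        rw [hw]; rw [sub_smul, one_smul, smul_sub]; abel
      have hps := hprox X ((1 - t) • u + t • v)
      rw [hZ] at hps
      have hexp : ‖(u - X) + t • w‖ ^ 2
          = ‖u - X‖ ^ 2 + 2 * (t * mip (u - X) w) + t ^ 2 * ‖w‖ ^ 2 := by
        rw [norm_add_sq_mip, mip_smul_right]
        congr 1
        rw [norm_sq_eq_mip, norm_sq_eq_mip, mip_smul_left, mip_smul_right]; ring
      rw [hexp] at hps
      have h1 : t * g u ≤ t * g v + 2 * c * (t * mip (u - X) w) + c * (t ^ 2 * ‖w‖ ^ 2) := by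
        nlinarith [hps, hcv]
      have hmix : mip (X - u) w = - mip (u - X) w := by
        rw [show X - u = (X - u) - 0 by abel, show (X - u) - 0 = 0 - (u - X) by abel,
          mip_sub_left, mip_sub_left]
        have : mip (0 : Matrix (Fin n) (Fin p) ℝ) w = 0 := by
          have h0 := mip_smul_left (0:ℝ) (0 : Matrix (Fin n) (Fin p) ℝ) w
          simpa using h0
        rw [this]; ring
      have hσc : σ⁻¹ = 2 * c := by rw [hcdef]; field_simp
      have h2 : t * (g u + σ⁻¹ * mip (X - u) w) ≤ t * (g v + t * (c * ‖w‖ ^ 2)) := by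
        rw [hmix, hσc]; nlinarith [h1]
      exact le_of_mul_le_mul_left h2 ht0
    refine le_of_forall_pos_le_add ?_
    intro ε hε
    set K := c * ‖w‖ ^ 2 with hK
    have hK0 : 0 ≤ K := by positivity
    have ht0 : 0 < min 1 (ε / (K + 1)) := by positivity
    have := key _ ht0 (min_le_left _ _)
    have htK : min 1 (ε / (K + 1)) * K ≤ ε := by
      calc min 1 (ε / (K + 1)) * K ≤ (ε / (K + 1)) * K := by
            apply mul_le_mul_of_nonneg_right (min_le_right _ _) hK0
        _ ≤ ε := by
            rw [div_mul_eq_mul_div, div_le_iff₀ (by positivity)]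
            nlinarith
    linarith
  -- nonexpansiveness of prox
  have nonexp : ∀ X Y : Matrix (Fin n) (Fin p) ℝ, ‖prox Y - prox X‖ ≤ ‖Y - X‖ := by
    intro X Y
    set u := prox X
    set v := prox Y
    have h1 := subgrad X v
    have h2 := subgrad Y u
    have hsum : mip (X - u) (v - u) + mip (Y - v) (u - v) ≤ 0 := by
      have hσ' : 0 < σ⁻¹ := by positivity
      nlinarith [h1, h2]
    have hflip : mip (Y - v) (u - v) = - mip (Y - v) (v - u) := by
      rw [show u - v = (u - v) - 0 by abel, show (u - v) - 0 = 0 - (v - u) by abel,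
        mip_sub_right, mip_sub_right]
      have h0 := mip_smul_right (0:ℝ) (Y - v) (0 : Matrix (Fin n) (Fin p) ℝ)
      simp at h0
      rw [show mip (Y - v) (0 : Matrix (Fin n) (Fin p) ℝ)
        = mip (Y - v) ((0:ℝ) • (0 : Matrix (Fin n) (Fin p) ℝ)) by norm_num,
        mip_smul_right]
      ring
    have hkey : ‖v - u‖ ^ 2 ≤ mip (Y - X) (v - u) := by
      have : mip ((X - u) - (Y - v)) (v - u) ≤ 0 := by
        rw [mip_sub_left]; linarith [hsum, hflip]
      have hre : (X - u) - (Y - v) = (X - Y) + (v - u) := by abel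
      rw [hre, mip_add_left] at this
      have hXY : mip (X - Y) (v - u) = - mip (Y - X) (v - u) := by
        rw [show X - Y = (X - Y) - 0 by abel, show (X - Y) - 0 = 0 - (Y - X) by abel,
          mip_sub_left, mip_sub_left]
        have h0 := mip_smul_left (0:ℝ) (0 : Matrix (Fin n) (Fin p) ℝ) (v - u)
        simp at h0
        rw [show mip (0 : Matrix (Fin n) (Fin p) ℝ) (v - u)
          = mip ((0:ℝ) • (0 : Matrix (Fin n) (Fin p) ℝ)) (v - u) by norm_num,
          mip_smul_left]
        ring
      rw [norm_sq_eq_mip]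
      linarith [this, hXY]
    have hCS := mip_le_norm (Y - X) (v - u)
    rcases eq_or_lt_of_le (norm_nonneg (v - u)) with h0 | h0
    · rw [← h0]; exact norm_nonneg _
    · have : ‖v - u‖ ^ 2 ≤ ‖Y - X‖ * ‖v - u‖ := le_trans hkey hCS
      nlinarith
  -- upper quadratic bound
  have upper : ∀ X Y : Matrix (Fin n) (Fin p) ℝ,
      moreauEnv g σ Y - moreauEnv g σ X
        ≤ mip (σ⁻¹ • (X - prox X)) (Y - X) + c * ‖Y - X‖ ^ 2 := by
    intro X Y
    have h1 : moreauEnv g σ Y ≤ g (prox X) + c * ‖prox X - Y‖ ^ 2 := by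
      rw [envEq Y]; exact hprox Y (prox X)
    have hre : prox X - Y = (prox X - X) - (Y - X) := by abel
    have hexp : ‖prox X - Y‖ ^ 2
        = ‖prox X - X‖ ^ 2 - 2 * mip (prox X - X) (Y - X) + ‖Y - X‖ ^ 2 := by
      rw [hre, norm_sub_sq_mip]
    have hG : mip (σ⁻¹ • (X - prox X)) (Y - X) = - (2 * c) * mip (prox X - X) (Y - X) := by
      rw [mip_smul_left]
      have hflip : mip (X - prox X) (Y - X) = - mip (prox X - X) (Y - X) := by
        rw [show X - prox X = (X - prox X) - 0 by abel,
          show (X - prox X) - 0 = 0 - (prox X - X) by abel, mip_sub_left, mip_sub_left]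
        have h0 := mip_smul_left (0:ℝ) (0 : Matrix (Fin n) (Fin p) ℝ) (Y - X)
        simp at h0
        rw [show mip (0 : Matrix (Fin n) (Fin p) ℝ) (Y - X)
          = mip ((0:ℝ) • (0 : Matrix (Fin n) (Fin p) ℝ)) (Y - X) by norm_num,
          mip_smul_left]
        ring
      rw [hflip]
      have hσc : σ⁻¹ = 2 * c := by rw [hcdef]; field_simp
      rw [hσc]; ring
    rw [envEq X, hG]
    nlinarith [h1, hexp]
  -- the derivative bound
  have bound : ∀ X Y : Matrix (Fin n) (Fin p) ℝ,
      |moreauEnv g σ Y - moreauEnv g σ X - mip (σ⁻¹ • (X - prox X)) (Y - X)|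
        ≤ (3 / σ) * ‖Y - X‖ ^ 2 := by
    intro X Y
    have hub := upper X Y
    have hlb := upper Y X
    -- relate the two linear terms
    have hGdiff : mip (σ⁻¹ • (Y - prox Y)) (X - Y) + mip (σ⁻¹ • (X - prox X)) (Y - X)
        = mip (σ⁻¹ • ((X - prox X) - (Y - prox Y))) (Y - X) := by
      have hthis : mip (Y - prox Y) (X - Y) = - mip (Y - prox Y) (Y - X) := by
        rw [show X - Y = (X - Y) - 0 by abel, show (X - Y) - 0 = 0 - (Y - X) by abel,
          mip_sub_right, mip_sub_right]
        rw [show mip (Y - prox Y) (0 : Matrix (Fin n) (Fin p) ℝ)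
          = mip (Y - prox Y) ((0:ℝ) • (0 : Matrix (Fin n) (Fin p) ℝ)) by norm_num,
          mip_smul_right]
        ring
      have hexp := mip_sub_left (X - prox X) (Y - prox Y) (Y - X)
      rw [mip_smul_left, mip_smul_left, mip_smul_left, hexp, hthis]; ring
    have hnormdiff : ‖(X - prox X) - (Y - prox Y)‖ ≤ 2 * ‖Y - X‖ := by
      have hre : (X - prox X) - (Y - prox Y) = (prox Y - prox X) - (Y - X) := by abel
      rw [hre]
      calc ‖(prox Y - prox X) - (Y - X)‖ ≤ ‖prox Y - prox X‖ + ‖Y - X‖ := norm_sub_le _ _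
        _ ≤ 2 * ‖Y - X‖ := by linarith [nonexp X Y]
    have hCS : mip (σ⁻¹ • ((X - prox X) - (Y - prox Y))) (Y - X)
        ≤ (2 / σ) * ‖Y - X‖ ^ 2 := by
      rw [mip_smul_left]
      have h1 := mip_le_norm ((X - prox X) - (Y - prox Y)) (Y - X)
      have h2 : ‖(X - prox X) - (Y - prox Y)‖ * ‖Y - X‖ ≤ 2 * ‖Y - X‖ * ‖Y - X‖ :=
        mul_le_mul_of_nonneg_right hnormdiff (norm_nonneg _)
      have hσ' : 0 < σ⁻¹ := by positivity
      calc σ⁻¹ * mip ((X - prox X) - (Y - prox Y)) (Y - X)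
          ≤ σ⁻¹ * (2 * ‖Y - X‖ * ‖Y - X‖) := by
            apply mul_le_mul_of_nonneg_left (le_trans h1 h2) hσ'.le
        _ = (2 / σ) * ‖Y - X‖ ^ 2 := by field_simp
    have hXY : ‖X - Y‖ = ‖Y - X‖ := norm_sub_rev _ _
    rw [abs_le]
    constructor
    · -- lower bound
      have h3 := hlb
      rw [hXY] at h3
      have hcle : c ≤ 1 / σ := by
        rw [hcdef]
        apply div_le_div_of_nonneg_left (by norm_num) hσ
        linarith
      have hmul : c * ‖Y - X‖ ^ 2 ≤ (1 / σ) * ‖Y - X‖ ^ 2 :=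
        mul_le_mul_of_nonneg_right hcle (sq_nonneg _)
      have : (1 / σ) * ‖Y - X‖ ^ 2 + 2 / σ * ‖Y - X‖ ^ 2 = 3 / σ * ‖Y - X‖ ^ 2 := by ring
      linarith [h3, hGdiff, hCS, hmul]
    · have hcle : c ≤ 3 / σ := by
        rw [hcdef, div_le_div_iff₀ (by positivity) hσ]
        nlinarith
      have hmul : c * ‖Y - X‖ ^ 2 ≤ (3 / σ) * ‖Y - X‖ ^ 2 :=
        mul_le_mul_of_nonneg_right hcle (sq_nonneg _)
      have hmip : mip (σ⁻¹ • (X - prox X)) (Y - X) ≤ mip (σ⁻¹ • (X - prox X)) (Y - X) := le_refl _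
      -- need mip term small?  env Y - env X - mip ≤ c‖·‖² ≤ 3/σ‖·‖²
      linarith [hub, hmul]
  -- HasFDerivAt at every point
  have hasD : ∀ X : Matrix (Fin n) (Fin p) ℝ,
      HasFDerivAt (moreauEnv g σ)
        (LinearMap.toContinuousLinearMap (traceForm (σ⁻¹ • (X - prox X)))) X := by
    intro X
    refine hasFDerivAt_iff_isLittleO_nhds_zero.mpr ?_
    rw [Asymptotics.isLittleO_iff]
    intro ε hε
    have hδ : (0:ℝ) < ε * σ / 3 := by positivity
    filter_upwards [Metric.ball_mem_nhds (0 : Matrix (Fin n) (Fin p) ℝ) hδ] with H hH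
    have hHn : ‖H‖ < ε * σ / 3 := by
      simpa [dist_eq_norm] using hH
    have hb := bound X (X + H)
    have hre : X + H - X = H := by abel
    rw [hre] at hb
    erw [appEq] at *
    have : ‖moreauEnv g σ (X + H) - moreauEnv g σ X - mip (σ⁻¹ • (X - prox X)) H‖
        ≤ 3 / σ * ‖H‖ ^ 2 := by
      rw [Real.norm_eq_abs]; exact hb
    refine this.trans ?_
    have : 3 / σ * ‖H‖ ^ 2 = (3 / σ * ‖H‖) * ‖H‖ := by ring
    rw [this]
    apply mul_le_mul_of_nonneg_right _ (norm_nonneg H)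
    rw [div_mul_eq_mul_div, div_le_iff₀ hσ]
    nlinarith [hHn, norm_nonneg H]
  refine ⟨?_, hasD⟩
  -- continuous differentiability
  rw [contDiff_one_iff_fderiv]
  have hdiff : Differentiable ℝ (moreauEnv g σ) := fun X => (hasD X).differentiableAt
  refine ⟨hdiff, ?_⟩
  have hfd : (fderiv ℝ (moreauEnv g σ))
      = fun X => LinearMap.toContinuousLinearMap (traceForm (σ⁻¹ • (X - prox X))) := by
    funext X; exact (hasD X).fderiv
  erw [hfd]
  -- the linear dependence G ↦ toCLM (traceForm G)
  have hproxCont : Continuous prox := by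
    have : LipschitzWith 1 prox := by
      apply LipschitzWith.of_dist_le_mul
      intro x y
      rw [dist_eq_norm, dist_eq_norm, NNReal.coe_one, one_mul]
      exact nonexp y x
    exact this.continuous
  have hGcont : Continuous (fun X : Matrix (Fin n) (Fin p) ℝ => σ⁻¹ • (X - prox X)) :=
    (continuous_id.sub hproxCont).const_smul σ⁻¹
  let Φ : Matrix (Fin n) (Fin p) ℝ →ₗ[ℝ] (Matrix (Fin n) (Fin p) ℝ →L[ℝ] ℝ) :=
    { toFun := fun G => LinearMap.toContinuousLinearMap (traceForm G)
      map_add' := fun G G' => by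
        ext H
        simp only [ContinuousLinearMap.add_apply, LinearMap.coe_toContinuousLinearMap']
        show ((G + G')ᵀ * H).trace = (Gᵀ * H).trace + (G'ᵀ * H).trace
        rw [Matrix.transpose_add, Matrix.add_mul, Matrix.trace_add]
      map_smul' := fun r G => by
        ext H
        simp only [ContinuousLinearMap.coe_smul', Pi.smul_apply, RingHom.id_apply,
          LinearMap.coe_toContinuousLinearMap']
        show ((r • G)ᵀ * H).trace = r • (Gᵀ * H).trace
        rw [Matrix.transpose_smul, Matrix.smul_mul, Matrix.trace_smul] }
  have hΦcont : Continuous Φ := Φ.continuous_of_finiteDimensional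
  exact hΦcont.comp hGcont
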